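/- Let n ≤ m and let {A,B} be an (m,p,n)-GMP with GSVD as in the context, with generalized singular values (αᵢ, βᵢ). Then for every 1 ≤ i ≤ n, max_{Π₁ ∈ 𝕌_m, Π₂ ∈ 𝕌_n} |tr(Π₁ A (AᴴA + BᴴB)^{-1/2} Π₂ 𝒢_i)| = α₁ + α₂ + ⋯ + αᵢ. -/

import Mathlib

open Matrix BigOperators
open scoped ComplexOrder


lemma key_comb {n : ℕ} (α d : Fin n → ℝ) (i : Fin n)
    (hα0 : ∀ k, 0 ≤ α k) (hmono : Antitone α)
    (hd0 : ∀ l, 0 ≤ d l) (hd1 : ∀ l, d l ≤ 1)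
    (hsum : ∑ l, d l ≤ (Finset.Iic i).card) :
    ∑ l, α l * d l ≤ ∑ k ∈ Finset.Iic i, α k := by
  classical
  have hsplit : ∑ l, α l * d l
      = ∑ l ∈ Finset.Iic i, α l * d l + ∑ l ∈ (Finset.Iic i)ᶜ, α l * d l :=
    (Finset.sum_add_sum_compl _ _).symm
  have h2 : ∑ l ∈ (Finset.Iic i)ᶜ, α l * d l ≤ α i * ∑ l ∈ (Finset.Iic i)ᶜ, d l := by
    rw [Finset.mul_sum]
    apply Finset.sum_le_sum
    intro l hl
    have : i ≤ l := le_of_lt (by simpa [Finset.mem_compl, Finset.mem_Iic, not_le] using hl)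
    exact mul_le_mul_of_nonneg_right (hmono this) (hd0 l)
  have h4 : ∑ l, d l = ∑ l ∈ Finset.Iic i, d l + ∑ l ∈ (Finset.Iic i)ᶜ, d l :=
    (Finset.sum_add_sum_compl _ _).symm
  have h3 : ∑ l ∈ (Finset.Iic i)ᶜ, d l ≤ (Finset.Iic i).card - ∑ l ∈ Finset.Iic i, d l := by
    linarith
  have h5 : ∑ l ∈ (Finset.Iic i)ᶜ, α l * d l
      ≤ α i * ((Finset.Iic i).card - ∑ l ∈ Finset.Iic i, d l) :=
    le_trans h2 (mul_le_mul_of_nonneg_left h3 (hα0 i))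
  have h6 : ∑ l ∈ Finset.Iic i, α l * d l
      + α i * ((Finset.Iic i).card - ∑ l ∈ Finset.Iic i, d l)
      ≤ ∑ k ∈ Finset.Iic i, α k := by
    have hcard : (((Finset.Iic i).card : ℝ)) = ∑ _l ∈ Finset.Iic i, (1:ℝ) := by simp
    rw [hcard, ← Finset.sum_sub_distrib, Finset.mul_sum, ← Finset.sum_add_distrib]
    apply Finset.sum_le_sum
    intro l hl
    have hli : l ≤ i := Finset.mem_Iic.mp hl
    have := hmono hli
    nlinarith [hd0 l, hd1 l, hα0 l]
  linarith

-- unitary column/row norms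
lemma unitary_col {k : ℕ} (V : Matrix (Fin k) (Fin k) ℂ)
    (hV : V ∈ Matrix.unitaryGroup (Fin k) ℂ) (c : Fin k) :
    ∑ r, ‖V r c‖ ^ 2 = 1 := by
  have h := Matrix.mem_unitaryGroup_iff'.mp hV
  have := congrFun (congrFun h c) c
  simp only [Matrix.mul_apply, Matrix.one_apply_eq, Matrix.star_apply, RCLike.star_def] at this
  have h2 : ∑ r, ((‖V r c‖ ^ 2 : ℝ) : ℂ) = 1 := by
    rw [← this]
    apply Finset.sum_congr rfl
    intro r _
    rw [Complex.sq_norm, Complex.normSq_eq_conj_mul_self]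
  have := Complex.ofReal_injective (by exact_mod_cast h2 : ((∑ r, ‖V r c‖ ^ 2 : ℝ) : ℂ) = ((1:ℝ):ℂ))
  exact this

lemma unitary_row {k : ℕ} (V : Matrix (Fin k) (Fin k) ℂ)
    (hV : V ∈ Matrix.unitaryGroup (Fin k) ℂ) (r : Fin k) :
    ∑ c, ‖V r c‖ ^ 2 = 1 := by
  have h := Matrix.mem_unitaryGroup_iff.mp hV
  have := congrFun (congrFun h r) r
  simp only [Matrix.mul_apply, Matrix.one_apply_eq, Matrix.star_apply, RCLike.star_def] at this
  have h2 : ∑ c, ((‖V r c‖ ^ 2 : ℝ) : ℂ) = 1 := by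
    rw [← this]
    apply Finset.sum_congr rfl
    intro c _
    rw [Complex.sq_norm, Complex.normSq_eq_conj_mul_self]
    ring
  exact Complex.ofReal_injective (by exact_mod_cast h2 : ((∑ c, ‖V r c‖ ^ 2 : ℝ) : ℂ) = ((1:ℝ):ℂ))

lemma trace_formula {m n : ℕ} (hnm : n ≤ m) (i : Fin n) (X : Matrix (Fin m) (Fin n) ℂ) :
    Matrix.trace (X * (Matrix.of fun (k : Fin n) (l : Fin m) =>
      if (k : ℕ) = (l : ℕ) ∧ (k : ℕ) ≤ (i : ℕ) then (1 : ℂ) else 0))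
    = ∑ j ∈ Finset.Iic i, X (Fin.castLE hnm j) j := by
  classical
  rw [Matrix.trace_mul_comm, Matrix.trace]
  have hdiag : ∀ j : Fin n,
      ((Matrix.of fun (k : Fin n) (l : Fin m) =>
        if (k : ℕ) = (l : ℕ) ∧ (k : ℕ) ≤ (i : ℕ) then (1 : ℂ) else 0) * X).diag j
      = if (j : ℕ) ≤ (i : ℕ) then X (Fin.castLE hnm j) j else 0 := by
    intro j
    simp only [Matrix.diag, Matrix.mul_apply, Matrix.of_apply]
    rw [Finset.sum_eq_single (Fin.castLE hnm j)]
    · simp [Fin.castLE]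
    · intro k _ hk
      have : ¬ ((j : ℕ) = (k : ℕ)) := by
        intro h
        apply hk
        apply Fin.ext
        simp [Fin.castLE, ← h]
      simp [this]
    · intro h; exact absurd (Finset.mem_univ _) h
  rw [Finset.sum_congr rfl (fun j _ => hdiag j)]
  rw [← Finset.sum_filter]
  congr 1
  ext j
  simp only [Finset.mem_filter, Finset.mem_Iic, Finset.mem_univ, true_and]
  exact Fin.le_def.symm

lemma emb_sum_le {m n : ℕ} (hnm : n ≤ m) (s : Finset (Fin n)) (f : Fin m → ℝ)
    (hf : ∀ r, 0 ≤ f r) : ∑ j ∈ s, f (Fin.castLE hnm j) ≤ ∑ r, f r := by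
  classical
  rw [← Finset.sum_image (g := Fin.castLE hnm) (f := f)
      (fun x _ y _ h => Fin.castLE_injective hnm h)]
  exact Finset.sum_le_sum_of_subset_of_nonneg (Finset.subset_univ _) (fun r _ _ => hf r)

lemma cs_bound {ι : Type*} (s : Finset ι) (a b : ι → ℝ)
    (ha : ∀ j, 0 ≤ a j) (hb : ∀ j, 0 ≤ b j)
    (h1 : ∑ j ∈ s, a j ^ 2 ≤ 1) (h2 : ∑ j ∈ s, b j ^ 2 ≤ 1) :
    ∑ j ∈ s, a j * b j ≤ 1 := by
  have hcs := Finset.sum_mul_sq_le_sq_mul_sq s a b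
  have hnn : 0 ≤ ∑ j ∈ s, a j * b j :=
    Finset.sum_nonneg (fun j _ => mul_nonneg (ha j) (hb j))
  have hp : 0 ≤ ∑ j ∈ s, a j ^ 2 := Finset.sum_nonneg (fun j _ => sq_nonneg _)
  nlinarith

lemma bound_lemma {m n : ℕ} (hnm : n ≤ m) (α : Fin n → ℝ)
    (hα0 : ∀ k, 0 ≤ α k) (hmono : Antitone α) (i : Fin n)
    (V : Matrix (Fin m) (Fin m) ℂ) (hV : V ∈ Matrix.unitaryGroup (Fin m) ℂ)
    (W : Matrix (Fin n) (Fin n) ℂ) (hW : W ∈ Matrix.unitaryGroup (Fin n) ℂ) :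
    ‖Matrix.trace (V * (Matrix.of fun (k : Fin m) (l : Fin n) =>
        if (k : ℕ) = (l : ℕ) then Complex.ofReal (α l) else 0) * W *
      (Matrix.of (fun (k : Fin n) (l : Fin m) =>
          if (k : ℕ) = (l : ℕ) ∧ (k : ℕ) ≤ (i : ℕ) then (1 : ℂ) else 0)))‖
      ≤ ∑ k ∈ Finset.Iic i, α k := by
  classical
  set Sig : Matrix (Fin m) (Fin n) ℂ := Matrix.of fun (k : Fin m) (l : Fin n) =>
      if (k : ℕ) = (l : ℕ) then Complex.ofReal (α l) else 0 with hSig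
  have hVS : ∀ (r : Fin m) (l : Fin n), (V * Sig) r l = V r (Fin.castLE hnm l) * Complex.ofReal (α l) := by
    intro r l
    simp only [Matrix.mul_apply, hSig, Matrix.of_apply]
    rw [Finset.sum_eq_single (Fin.castLE hnm l)]
    · simp [Fin.castLE]
    · intro k _ hk
      have : ¬ ((k : ℕ) = (l : ℕ)) := by
        intro h
        apply hk
        apply Fin.ext
        simp [Fin.castLE, h]
      simp [this]
    · intro h; exact absurd (Finset.mem_univ _) h
  rw [trace_formula hnm i (V * Sig * W)]
  have hentry : ∀ j : Fin n, (V * Sig * W) (Fin.castLE hnm j) j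
      = ∑ l, V (Fin.castLE hnm j) (Fin.castLE hnm l) * Complex.ofReal (α l) * W l j := by
    intro j
    simp only [Matrix.mul_apply]
    apply Finset.sum_congr rfl
    intro l _
    rw [← Matrix.mul_apply, hVS]
  rw [Finset.sum_congr rfl (fun j _ => hentry j), Finset.sum_comm]
  set c : Fin n → ℂ := fun l => ∑ j ∈ Finset.Iic i, V (Fin.castLE hnm j) (Fin.castLE hnm l) * W l j with hc
  have hrw : ∀ l : Fin n, ∑ j ∈ Finset.Iic i,
      V (Fin.castLE hnm j) (Fin.castLE hnm l) * Complex.ofReal (α l) * W l j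
      = Complex.ofReal (α l) * c l := by
    intro l
    rw [hc, Finset.mul_sum]
    apply Finset.sum_congr rfl
    intro j _
    ring
  rw [Finset.sum_congr rfl (fun l _ => hrw l)]
  set d : Fin n → ℝ := fun l => ‖c l‖ with hd
  have habs : ‖∑ l, Complex.ofReal (α l) * c l‖ ≤ ∑ l, α l * d l := by
    refine le_trans (norm_sum_le _ _) ?_
    apply Finset.sum_le_sum
    intro l _
    rw [norm_mul, Complex.norm_real, Real.norm_of_nonneg (hα0 l)]
  refine le_trans habs ?_
  -- now apply key_comb
  have hd0 : ∀ l, 0 ≤ d l := fun l => norm_nonneg _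
  have hdle : ∀ l, d l ≤ ∑ j ∈ Finset.Iic i,
      ‖V (Fin.castLE hnm j) (Fin.castLE hnm l)‖ * ‖W l j‖ := by
    intro l
    refine le_trans (norm_sum_le _ _) ?_
    apply Finset.sum_le_sum
    intro j _
    exact le_of_eq (norm_mul _ _)
  have hVcol : ∀ cc : Fin m, ∑ j ∈ Finset.Iic i,
      ‖V (Fin.castLE hnm j) cc‖ ^ 2 ≤ 1 := by
    intro cc
    calc ∑ j ∈ Finset.Iic i, ‖V (Fin.castLE hnm j) cc‖ ^ 2
        ≤ ∑ r, ‖V r cc‖ ^ 2 :=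
          emb_sum_le hnm _ (fun r => ‖V r cc‖ ^ 2) (fun r => sq_nonneg _)
      _ = 1 := unitary_col V hV cc
  have hWrow : ∀ l : Fin n, ∑ j ∈ Finset.Iic i, ‖W l j‖ ^ 2 ≤ 1 := by
    intro l
    calc ∑ j ∈ Finset.Iic i, ‖W l j‖ ^ 2
        ≤ ∑ j, ‖W l j‖ ^ 2 :=
          Finset.sum_le_sum_of_subset_of_nonneg (Finset.subset_univ _) (fun r _ _ => sq_nonneg _)
      _ = 1 := unitary_row W hW l
  have hd1 : ∀ l, d l ≤ 1 := by
    intro l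
    refine le_trans (hdle l) ?_
    exact cs_bound _ _ _ (fun j => norm_nonneg _) (fun j => norm_nonneg _)
      (hVcol (Fin.castLE hnm l)) (hWrow l)
  have hVrowEmb : ∀ r : Fin m, ∑ l : Fin n, ‖V r (Fin.castLE hnm l)‖ ^ 2 ≤ 1 := by
    intro r
    calc ∑ l : Fin n, ‖V r (Fin.castLE hnm l)‖ ^ 2
        ≤ ∑ cc, ‖V r cc‖ ^ 2 :=
          emb_sum_le hnm _ (fun cc => ‖V r cc‖ ^ 2) (fun cc => sq_nonneg _)
      _ = 1 := unitary_row V hV r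
  have hWcol : ∀ j : Fin n, ∑ l, ‖W l j‖ ^ 2 = 1 := fun j => unitary_col W hW j
  have hsum : ∑ l, d l ≤ (Finset.Iic i).card := by
    calc ∑ l, d l ≤ ∑ l, ∑ j ∈ Finset.Iic i,
          ‖V (Fin.castLE hnm j) (Fin.castLE hnm l)‖ * ‖W l j‖ :=
        Finset.sum_le_sum (fun l _ => hdle l)
      _ = ∑ j ∈ Finset.Iic i, ∑ l,
          ‖V (Fin.castLE hnm j) (Fin.castLE hnm l)‖ * ‖W l j‖ :=
        Finset.sum_comm
      _ ≤ ∑ _j ∈ Finset.Iic i, (1 : ℝ) := by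
          apply Finset.sum_le_sum
          intro j _
          exact cs_bound _ _ _ (fun l => norm_nonneg _) (fun l => norm_nonneg _)
            (hVrowEmb (Fin.castLE hnm j)) (le_of_eq (hWcol j))
      _ = (Finset.Iic i).card := by simp
  exact key_comb α d i hα0 hmono hd0 hd1 hsum

theorem stmt12
    {m p n : ℕ} (hnm : n ≤ m)
    (A : Matrix (Fin m) (Fin n) ℂ) (B : Matrix (Fin p) (Fin n) ℂ)
    (hrank : (Matrix.fromRows A B).rank = n)
    (U : Matrix (Fin m) (Fin m) ℂ) (hU : U ∈ Matrix.unitaryGroup (Fin m) ℂ)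
    (R : Matrix (Fin n) (Fin n) ℂ) (hR : IsUnit R.det)
    (α : Fin n → ℝ)
    (hα0 : ∀ k, 0 ≤ α k) (hα1 : ∀ k, α k ≤ 1) (hmono : Antitone α)
    (hA : A = U * (Matrix.of fun (k : Fin m) (l : Fin n) =>
        if (k : ℕ) = (l : ℕ) then Complex.ofReal (α l) else 0) * R)
    (hBB : Bᴴ * B = Rᴴ * Matrix.diagonal (fun l => Complex.ofReal (1 - α l ^ 2)) * R)
    (S : Matrix (Fin n) (Fin n) ℂ) (hS : S.PosDef)
    (hSsq : S * S = Aᴴ * A + Bᴴ * B)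
    (i : Fin n) :
(⨆ W1 : Matrix.unitaryGroup (Fin m) ℂ, ⨆ W2 : Matrix.unitaryGroup (Fin n) ℂ,
      ‖Matrix.trace ((W1 : Matrix (Fin m) (Fin m) ℂ) * A * S⁻¹ *
        (W2 : Matrix (Fin n) (Fin n) ℂ) *
        Matrix.of (fun (k : Fin n) (l : Fin m) =>
          if (k : ℕ) = (l : ℕ) ∧ (k : ℕ) ≤ (i : ℕ) then (1 : ℂ) else 0))‖) =
      ∑ k ∈ Finset.Iic i, α k := by
  classical
  set Sig : Matrix (Fin m) (Fin n) ℂ := Matrix.of fun (k : Fin m) (l : Fin n) =>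
      if (k : ℕ) = (l : ℕ) then Complex.ofReal (α l) else 0 with hSigdef
  set G : Matrix (Fin n) (Fin m) ℂ := Matrix.of (fun (k : Fin n) (l : Fin m) =>
      if (k : ℕ) = (l : ℕ) ∧ (k : ℕ) ≤ (i : ℕ) then (1 : ℂ) else 0) with hGdef
  have hU1 : star U * U = 1 := Matrix.mem_unitaryGroup_iff'.mp hU
  -- Sigᴴ * Sig = diagonal α²
  have hSS : Sigᴴ * Sig = Matrix.diagonal (fun l => (Complex.ofReal (α l))^2) := by
    ext l l'
    simp only [Matrix.mul_apply, Matrix.conjTranspose_apply, hSigdef, Matrix.of_apply]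
    rw [Finset.sum_eq_single (Fin.castLE hnm l)]
    · by_cases h : l = l'
      · subst h
        simp [Fin.castLE, Matrix.diagonal, sq]
      · have hne : ¬ ((l : ℕ) = (l' : ℕ)) := fun hh => h (Fin.ext hh)
        have : ¬ (((Fin.castLE hnm l : Fin m) : ℕ) = (l' : ℕ)) := by
          simpa [Fin.castLE] using hne
        simp [Matrix.diagonal, this, h, hne]
    · intro k _ hk
      have : ¬ ((k : ℕ) = (l : ℕ)) := by
        intro hh
        exact hk (Fin.ext (by simp [Fin.castLE, hh]))
      simp [this]
    · intro h; exact absurd (Finset.mem_univ _) h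
  -- Aᴴ A = Rᴴ diag(α²) R
  have hAA : Aᴴ * A = Rᴴ * Matrix.diagonal (fun l => (Complex.ofReal (α l))^2) * R := by
    rw [hA]
    rw [Matrix.conjTranspose_mul, Matrix.conjTranspose_mul]
    calc Rᴴ * (Sigᴴ * Uᴴ) * (U * Sig * R)
        = Rᴴ * (Sigᴴ * ((Uᴴ * U) * (Sig * R))) := by simp only [Matrix.mul_assoc]
      _ = Rᴴ * (Sigᴴ * Sig * R) := by
          rw [show Uᴴ * U = 1 from by rw [← Matrix.star_eq_conjTranspose]; exact hU1]
          simp [Matrix.mul_assoc]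
      _ = Rᴴ * Matrix.diagonal (fun l => (Complex.ofReal (α l))^2) * R := by
          rw [hSS]; simp [Matrix.mul_assoc]
  -- Rᴴ R = S S
  have hRR : S * S = Rᴴ * R := by
    rw [hSsq, hAA, hBB]
    calc Rᴴ * Matrix.diagonal (fun l => (Complex.ofReal (α l))^2) * R
          + Rᴴ * Matrix.diagonal (fun l => Complex.ofReal (1 - α l ^ 2)) * R
        = Rᴴ * (Matrix.diagonal (fun l => (Complex.ofReal (α l))^2)
            + Matrix.diagonal (fun l => Complex.ofReal (1 - α l ^ 2))) * R := by
          rw [Matrix.mul_add, Matrix.add_mul]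
      _ = Rᴴ * R := by
          rw [Matrix.diagonal_add]
          have : (fun l => (Complex.ofReal (α l))^2 + Complex.ofReal (1 - α l ^ 2))
              = fun _ => (1 : ℂ) := by
            funext l; push_cast; ring
          rw [this, Matrix.diagonal_one, Matrix.mul_one]
  have hSdet : IsUnit S.det := (Matrix.isUnit_iff_isUnit_det S).mp hS.isUnit
  have hSinv1 : S * S⁻¹ = 1 := Matrix.mul_nonsing_inv _ hSdet
  have hSinv2 : S⁻¹ * S = 1 := Matrix.nonsing_inv_mul _ hSdet
  have hSinvH : S⁻¹ᴴ = S⁻¹ := by rw [Matrix.conjTranspose_nonsing_inv, hS.isHermitian.eq]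
  set Q : Matrix (Fin n) (Fin n) ℂ := R * S⁻¹ with hQdef
  have hQmem : Q ∈ Matrix.unitaryGroup (Fin n) ℂ := by
    rw [Matrix.mem_unitaryGroup_iff']
    rw [Matrix.star_eq_conjTranspose, hQdef, Matrix.conjTranspose_mul, hSinvH]
    calc S⁻¹ * Rᴴ * (R * S⁻¹) = S⁻¹ * (Rᴴ * R) * S⁻¹ := by simp only [Matrix.mul_assoc]
      _ = S⁻¹ * (S * S) * S⁻¹ := by rw [hRR]
      _ = (S⁻¹ * S) * (S * S⁻¹) := by simp only [Matrix.mul_assoc]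
      _ = 1 := by rw [hSinv1, hSinv2, one_mul]
  have hASQ : A * S⁻¹ = U * Sig * Q := by
    rw [hA, hQdef]; simp only [Matrix.mul_assoc]
  -- the target value
  set c : ℝ := ∑ k ∈ Finset.Iic i, α k with hcdef
  -- generic upper bound
  have hub : ∀ (W1 : Matrix.unitaryGroup (Fin m) ℂ) (W2 : Matrix.unitaryGroup (Fin n) ℂ),
      ‖Matrix.trace ((W1 : Matrix (Fin m) (Fin m) ℂ) * A * S⁻¹ *
        (W2 : Matrix (Fin n) (Fin n) ℂ) * G)‖ ≤ c := by
    intro W1 W2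
    have hre : (W1 : Matrix (Fin m) (Fin m) ℂ) * A * S⁻¹ * (W2 : Matrix (Fin n) (Fin n) ℂ) * G
        = ((W1 : Matrix (Fin m) (Fin m) ℂ) * U) * Sig * (Q * (W2 : Matrix (Fin n) (Fin n) ℂ)) * G := by
      rw [show (W1 : Matrix (Fin m) (Fin m) ℂ) * A * S⁻¹
          = (W1 : Matrix (Fin m) (Fin m) ℂ) * (A * S⁻¹) from by simp only [Matrix.mul_assoc],
        hASQ]
      simp only [Matrix.mul_assoc]
    rw [hre]
    exact bound_lemma hnm α hα0 hmono i _ (mul_mem W1.2 hU) _ (mul_mem hQmem W2.2)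
  -- attainment
  set W1o : Matrix.unitaryGroup (Fin m) ℂ := ⟨star U, Unitary.star_mem hU⟩ with hW1o
  set W2o : Matrix.unitaryGroup (Fin n) ℂ := ⟨star Q, Unitary.star_mem hQmem⟩ with hW2o
  have hattain : ‖Matrix.trace ((W1o : Matrix (Fin m) (Fin m) ℂ) * A * S⁻¹ *
      (W2o : Matrix (Fin n) (Fin n) ℂ) * G)‖ = c := by
    have hred : (W1o : Matrix (Fin m) (Fin m) ℂ) * A * S⁻¹ *
        (W2o : Matrix (Fin n) (Fin n) ℂ) = Sig := by
      show star U * A * S⁻¹ * star Q = Sig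
      rw [show star U * A * S⁻¹ = star U * (A * S⁻¹) from by simp only [Matrix.mul_assoc], hASQ]
      calc star U * (U * Sig * Q) * star Q
          = (star U * U) * (Sig * (Q * star Q)) := by simp only [Matrix.mul_assoc]
        _ = Sig := by
            rw [hU1, Matrix.mem_unitaryGroup_iff.mp hQmem]; simp
    rw [hred, hGdef, trace_formula hnm i Sig]
    have hdiagval : ∀ j : Fin n, j ∈ Finset.Iic i → Sig (Fin.castLE hnm j) j = Complex.ofReal (α j) := by
      intro j _
      simp [hSigdef, Fin.castLE]
    rw [Finset.sum_congr rfl hdiagval, ← Complex.ofReal_sum, Complex.norm_real,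
      Real.norm_of_nonneg (Finset.sum_nonneg (fun k _ => hα0 k))]
  haveI : Nonempty (Matrix.unitaryGroup (Fin m) ℂ) := ⟨1⟩
  haveI : Nonempty (Matrix.unitaryGroup (Fin n) ℂ) := ⟨1⟩
  apply le_antisymm
  · exact ciSup_le fun W1 => ciSup_le fun W2 => hub W1 W2
  · have hb2 : BddAbove (Set.range fun W2 : Matrix.unitaryGroup (Fin n) ℂ =>
        ‖Matrix.trace ((W1o : Matrix (Fin m) (Fin m) ℂ) * A * S⁻¹ *
          (W2 : Matrix (Fin n) (Fin n) ℂ) * G)‖) := by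
      refine ⟨c, ?_⟩
      rintro _ ⟨W2, rfl⟩
      exact hub W1o W2
    have h1 : c ≤ ⨆ W2 : Matrix.unitaryGroup (Fin n) ℂ,
        ‖Matrix.trace ((W1o : Matrix (Fin m) (Fin m) ℂ) * A * S⁻¹ *
          (W2 : Matrix (Fin n) (Fin n) ℂ) * G)‖ := hattain ▸ le_ciSup hb2 W2o
    refine le_trans h1 ?_
    have hb1 : BddAbove (Set.range fun W1 : Matrix.unitaryGroup (Fin m) ℂ =>
        ⨆ W2 : Matrix.unitaryGroup (Fin n) ℂ,
          ‖Matrix.trace ((W1 : Matrix (Fin m) (Fin m) ℂ) * A * S⁻¹ *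
            (W2 : Matrix (Fin n) (Fin n) ℂ) * G)‖) := by
      refine ⟨c, ?_⟩
      rintro _ ⟨W1, rfl⟩
      exact ciSup_le (hub W1)
    exact le_ciSup hb1 W1o
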